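/- Let S be a half strip with ℝ×[0,1) ⊆ S ⊆ ℝ×[0,1]. Then there exists a half strip S' with ℝ×[0,1) ⊆ S' ⊆ S and a homeomorphism h : S → S' such that: the closures of the boundary intervals of ∂₊S' = S' ∩ (ℝ×{1}) are bounded in ℝ² and pairwise disjoint; h is the identity on ℝ×{0}; and h preserves the second coordinate. -/

import Mathlib

set_option maxHeartbeats 1000000

open Set

/-- A half strip: ℝ×[0,1) ⊆ S ⊆ ℝ×[0,1], open in ℝ×[0,1]. -/
def IsHalfStrip (S : Set (ℝ × ℝ)) : Prop :=
  (univ ×ˢ Ico (0:ℝ) 1) ⊆ S ∧ S ⊆ univ ×ˢ Icc (0:ℝ) 1 ∧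
  ∃ U : Set (ℝ × ℝ), IsOpen U ∧ S = U ∩ (univ ×ˢ Icc (0:ℝ) 1)

/-- The upper boundary ∂₊S = S ∩ (ℝ×{1}) of a half strip. -/
def upBd (S : Set (ℝ × ℝ)) : Set (ℝ × ℝ) := S ∩ {p | p.2 = 1}

noncomputable section StmtSixProof


/-- The half strip determined by an open set `U ⊆ ℝ` of boundary points. -/
def HS (U : Set ℝ) : Set (ℝ × ℝ) := (univ ×ˢ Ico (0:ℝ) 1) ∪ U ×ˢ ({1} : Set ℝ)

lemma mem_HS {U : Set ℝ} {p : ℝ × ℝ} :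
    p ∈ HS U ↔ (0 ≤ p.2 ∧ p.2 < 1) ∨ (p.1 ∈ U ∧ p.2 = 1) := by
  simp only [HS, mem_union, mem_prod, mem_univ, mem_Ico, true_and, mem_singleton_iff]

lemma HS_mono {U V : Set ℝ} (h : U ⊆ V) : HS U ⊆ HS V := by
  intro p hp; rw [mem_HS] at *; rcases hp with h1 | h2
  · exact Or.inl h1
  · exact Or.inr ⟨h h2.1, h2.2⟩

lemma HS_subset_strip {U : Set ℝ} : HS U ⊆ univ ×ˢ Icc (0:ℝ) 1 := by
  intro p hp; rw [mem_HS] at hp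
  rcases hp with h1 | h2
  · exact ⟨trivial, h1.1, h1.2.le⟩
  · exact ⟨trivial, by rw [h2.2]; norm_num, by rw [h2.2]⟩

lemma snd_mem_of_HS {U : Set ℝ} {p : ℝ × ℝ} (hp : p ∈ HS U) : p.2 ∈ Icc (0:ℝ) 1 :=
  (HS_subset_strip hp).2

lemma mem_HS_of_lt {U : Set ℝ} {p : ℝ × ℝ} (h0 : 0 ≤ p.2) (h1 : p.2 < 1) : p ∈ HS U :=
  mem_HS.2 (Or.inl ⟨h0, h1⟩)

lemma mem_HS_one {U : Set ℝ} {x : ℝ} (hx : x ∈ U) : (x, (1:ℝ)) ∈ HS U :=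
  mem_HS.2 (Or.inr ⟨hx, rfl⟩)

lemma mem_HS_of_mem_U {U : Set ℝ} {x y : ℝ} (hx : x ∈ U) (h0 : 0 ≤ y) (h1 : y ≤ 1) :
    (x, y) ∈ HS U := by
  rcases lt_or_eq_of_le h1 with h | h
  · exact mem_HS_of_lt h0 h
  · rw [h]; exact mem_HS_one hx

lemma isHalfStrip_HS {U : Set ℝ} (hU : IsOpen U) : IsHalfStrip (HS U) := by
  refine ⟨fun p hp => Or.inl hp, HS_subset_strip, (univ ×ˢ Iio 1) ∪ U ×ˢ univ, ?_, ?_⟩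
  · exact (isOpen_univ.prod isOpen_Iio).union (hU.prod isOpen_univ)
  · ext p
    rw [mem_HS]
    constructor
    · rintro (⟨h0, h1⟩ | ⟨hu, h1⟩)
      · exact ⟨Or.inl ⟨trivial, h1⟩, trivial, h0, h1.le⟩
      · exact ⟨Or.inr ⟨hu, trivial⟩, trivial, by rw [h1]; norm_num, by rw [h1]⟩
    · rintro ⟨h1 | h2, -, h0, hle⟩
      · exact Or.inl ⟨h0, h1.2⟩
      · rcases lt_or_eq_of_le hle with h | h
        · exact Or.inl ⟨h0, h⟩
        · exact Or.inr ⟨h2.1, h⟩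

/-- A half strip is of the form `HS U`. -/
lemma halfStrip_eq_HS {S : Set (ℝ × ℝ)} (hS : IsHalfStrip S) :
    ∃ U : Set ℝ, IsOpen U ∧ S = HS U := by
  obtain ⟨h1, h2, O, hO, hSO⟩ := hS
  refine ⟨{x | (x, (1:ℝ)) ∈ O}, hO.preimage (Continuous.prodMk_left 1), ?_⟩
  ext p
  rw [mem_HS]
  constructor
  · intro hp
    have hp2 := (h2 hp).2
    rcases lt_or_eq_of_le hp2.2 with h | h
    · exact Or.inl ⟨hp2.1, h⟩
    · refine Or.inr ⟨?_, h⟩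
      rw [hSO] at hp
      show (p.1, (1:ℝ)) ∈ O
      rw [← h]
      exact hp.1
  · rintro (h | h)
    · exact h1 ⟨trivial, h⟩
    · have : p = (p.1, (1:ℝ)) := by rw [← h.2]
      rw [hSO, this]
      exact ⟨h.1, trivial, by norm_num, le_refl 1⟩

/-! ### The squeezing homeomorphism τ of ℝ onto (-1,1) -/

def tauR (x : ℝ) : ℝ := x / (1 + |x|)

lemma one_add_abs_pos (x : ℝ) : 0 < 1 + |x| := by positivity

lemma abs_tauR_lt_one (x : ℝ) : |tauR x| < 1 := by
  rw [tauR, abs_div, abs_of_pos (one_add_abs_pos x), div_lt_one (one_add_abs_pos x)]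
  linarith

lemma tauR_mem_Ioo (x : ℝ) : tauR x ∈ Ioo (-1 : ℝ) 1 := by
  have := abs_tauR_lt_one x
  rw [abs_lt] at this
  exact ⟨this.1, this.2⟩

lemma tauR_strictMono : StrictMono tauR := by
  intro x y hxy
  rw [tauR, tauR, div_lt_div_iff₀ (one_add_abs_pos x) (one_add_abs_pos y)]
  rcases le_or_gt 0 x with hx | hx
  · have hy : 0 ≤ y := le_of_lt (lt_of_le_of_lt hx hxy)
    rw [abs_of_nonneg hx, abs_of_nonneg hy]; nlinarith
  · rcases le_or_gt 0 y with hy | hy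
    · nlinarith [abs_nonneg x, abs_nonneg y, neg_abs_le x, le_abs_self y]
    · rw [abs_of_neg hx, abs_of_neg hy]; nlinarith

lemma tauR_continuous : Continuous tauR := by
  apply Continuous.div continuous_id (by continuity)
  intro x; exact ne_of_gt (one_add_abs_pos x)

def sigR (z : ℝ) : ℝ := z / (1 - |z|)

lemma sigR_tauR (x : ℝ) : sigR (tauR x) = x := by
  have h := one_add_abs_pos x
  rw [sigR, tauR, abs_div, abs_of_pos h]
  have h2 : 1 - |x| / (1 + |x|) = 1 / (1 + |x|) := by field_simp; ring
  rw [h2]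
  field_simp


/-- slice domains -/
lemma slice_mem_iff {U : Set ℝ} {x y : ℝ} (hy0 : 0 ≤ y) (hy1 : y ≤ 1) :
    (x, y) ∈ HS U ↔ (y < 1 ∨ x ∈ U) := by
  rw [mem_HS]
  constructor
  · rintro (⟨-, h⟩ | ⟨h, -⟩)
    · exact Or.inl h
    · exact Or.inr h
  · rintro (h | h)
    · exact Or.inl ⟨hy0, h⟩
    · rcases lt_or_eq_of_le hy1 with h' | h'
      · exact Or.inl ⟨hy0, h'⟩
      · exact Or.inr ⟨h, h'⟩

/-- A "nice" map between half strips: a slice-wise strictly increasing homeomorphism. -/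
def Nice (U V : Set ℝ) (h : ℝ × ℝ → ℝ × ℝ) : Prop :=
  BijOn h (HS U) (HS V) ∧ ContinuousOn h (HS U) ∧ (∀ p ∈ HS U, (h p).2 = p.2) ∧
  ∀ y ∈ Icc (0:ℝ) 1, StrictMonoOn (fun x => (h (x, y)).1) {x | (x, y) ∈ HS U}

lemma Nice.pair_eq {U V : Set ℝ} {h : ℝ × ℝ → ℝ × ℝ} (hN : Nice U V h) {p : ℝ × ℝ}
    (hp : p ∈ HS U) : h p = ((h p).1, p.2) := by
  rw [← hN.2.2.1 p hp]

lemma Nice.comp {U V W : Set ℝ} {f g : ℝ × ℝ → ℝ × ℝ} (hf : Nice U V f) (hg : Nice V W g) :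
    Nice U W (g ∘ f) := by
  refine ⟨hg.1.comp hf.1, hg.2.1.comp hf.2.1 hf.1.mapsTo, ?_, ?_⟩
  · intro p hp
    have h1 := hf.2.2.1 p hp
    have h2 := hg.2.2.1 (f p) (hf.1.mapsTo hp)
    simp only [Function.comp_apply]
    rw [h2, h1]
  · intro y hy x1 hx1 x2 hx2 hlt
    have hfx1 : f (x1, y) ∈ HS V := hf.1.mapsTo hx1
    have hfx2 : f (x2, y) ∈ HS V := hf.1.mapsTo hx2
    have e1 : f (x1, y) = ((f (x1, y)).1, y) := hf.pair_eq hx1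
    have e2 : f (x2, y) = ((f (x2, y)).1, y) := hf.pair_eq hx2
    have hlt' : (f (x1, y)).1 < (f (x2, y)).1 := hf.2.2.2 y hy hx1 hx2 hlt
    have m1 : ((f (x1, y)).1, y) ∈ HS V := by rw [← e1]; exact hfx1
    have m2 : ((f (x2, y)).1, y) ∈ HS V := by rw [← e2]; exact hfx2
    have := hg.2.2.2 y hy m1 m2 hlt'
    simpa [Function.comp_apply, ← e1, ← e2] using this

lemma Nice.restrict {U V U' V' : Set ℝ} {f : ℝ × ℝ → ℝ × ℝ} (hf : Nice U V f)
    (hU : U' ⊆ U) (hV : V' ⊆ V) (him : f '' (HS U') = HS V') : Nice U' V' f := by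
  have hsub : HS U' ⊆ HS U := HS_mono hU
  refine ⟨⟨?_, hf.1.injOn.mono hsub, ?_⟩, hf.2.1.mono hsub, fun p hp => hf.2.2.1 p (hsub hp), ?_⟩
  · intro p hp; rw [← him]; exact mem_image_of_mem f hp
  · intro q hq; rw [← him] at hq; exact hq
  · intro y hy x1 hx1 x2 hx2 hlt
    exact hf.2.2.2 y hy (hsub hx1) (hsub hx2) hlt

lemma Nice.inv {U V : Set ℝ} {h : ℝ × ℝ → ℝ × ℝ} (hU : IsOpen U) (hN : Nice U V h) :
    Nice V U (Function.invFunOn h (HS U)) ∧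
      ContinuousOn (Function.invFunOn h (HS U)) (HS V) := by
  set g := Function.invFunOn h (HS U) with hg
  have hinv : InvOn g h (HS U) (HS V) := hN.1.invOn_invFunOn
  have hmaps : MapsTo g (HS V) (HS U) := hN.1.surjOn.mapsTo_invFunOn
  have hgh : ∀ q ∈ HS V, h (g q) = q := fun q hq => hinv.2 hq
  have hsnd : ∀ q ∈ HS V, (g q).2 = q.2 := by
    intro q hq
    have := hN.2.2.1 (g q) (hmaps hq)
    rw [hgh q hq] at this
    exact this.symm
  have hgpair : ∀ q ∈ HS V, g q = ((g q).1, q.2) := by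
    intro q hq
    rw [← hsnd q hq]
  have hmono : ∀ y ∈ Icc (0:ℝ) 1, StrictMonoOn (fun z => (g (z, y)).1) {z | (z, y) ∈ HS V} := by
    intro y hy z1 hz1 z2 hz2 hlt
    simp only [mem_setOf_eq] at hz1 hz2
    have e1 : g (z1, y) = ((g (z1, y)).1, y) := hgpair _ hz1
    have e2 : g (z2, y) = ((g (z2, y)).1, y) := hgpair _ hz2
    have m1 : ((g (z1, y)).1, y) ∈ HS U := by rw [← e1]; exact hmaps hz1
    have m2 : ((g (z2, y)).1, y) ∈ HS U := by rw [← e2]; exact hmaps hz2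
    by_contra hle
    push_neg at hle
    rcases lt_or_eq_of_le hle with hlt' | heq
    · have h5 : (h ((g (z2, y)).1, y)).1 < (h ((g (z1, y)).1, y)).1 :=
        hN.2.2.2 y hy m2 m1 hlt'
      rw [← e1, ← e2, hgh _ hz1, hgh _ hz2] at h5
      simp only at h5
      linarith
    · have heq2 : g (z2, y) = g (z1, y) := by rw [e1, e2, heq]
      have h1 := hgh _ hz1
      have h2 := hgh _ hz2
      rw [heq2, h1] at h2
      have := congrArg Prod.fst h2
      simp only at this
      linarith
  have hcont : ContinuousOn g (HS V) := by
    intro q₀ hq₀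
    set p₀ := g q₀ with hp₀def
    have hp₀ : p₀ ∈ HS U := hmaps hq₀
    have hhp₀ : h p₀ = q₀ := hgh q₀ hq₀
    have hy₀ : q₀.2 ∈ Icc (0:ℝ) 1 := snd_mem_of_HS hq₀
    have hp₀2 : p₀.2 = q₀.2 := hsnd q₀ hq₀
    rw [ContinuousWithinAt]
    rw [Metric.tendsto_nhds]
    intro ε hε
    -- find xlo < p₀.1 < xhi inside the slice domain, within ε/2
    have hD : ∃ η > 0, η ≤ ε / 2 ∧ ((p₀.1 - η, q₀.2) ∈ HS U ∧ (p₀.1 + η, q₀.2) ∈ HS U) ∧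
        (∀ y' ∈ Icc (0:ℝ) 1, (q₀.2 = 1 ∨ y' < 1) →
          (p₀.1 - η, y') ∈ HS U ∧ (p₀.1 + η, y') ∈ HS U) := by
      rcases eq_or_lt_of_le hy₀.2 with h1 | h1
      · -- q₀.2 = 1 : p₀ = (p₀.1, 1) ∈ U-part
        have hp₀U : p₀.1 ∈ U := by
          rcases mem_HS.1 hp₀ with h | h
          · exfalso; rw [hp₀2, h1] at h; exact absurd h.2 (lt_irrefl 1)
          · exact h.1
        rcases Metric.isOpen_iff.1 hU p₀.1 hp₀U with ⟨δ, hδ, hball⟩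
        refine ⟨min (δ/2) (ε/2), by positivity, min_le_right _ _, ?_, ?_⟩
        · constructor <;>
          · apply mem_HS_of_mem_U _ hy₀.1 hy₀.2
            apply hball
            rw [Metric.mem_ball, Real.dist_eq]
            have h6 : min (δ/2) (ε/2) ≤ δ/2 := min_le_left _ _
            have h7 : 0 < min (δ/2) (ε/2) := by positivity
            rw [abs_sub_comm]
            simp only [abs_sub_lt_iff]
            constructor <;> linarith
        · intro y' hy' _
          constructor <;>
          · apply mem_HS_of_mem_U _ hy'.1 hy'.2
            apply hball
            rw [Metric.mem_ball, Real.dist_eq, abs_sub_comm]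
            have h6 : min (δ/2) (ε/2) ≤ δ/2 := min_le_left _ _
            have h7 : 0 < min (δ/2) (ε/2) := by positivity
            simp only [abs_sub_lt_iff]
            constructor <;> linarith
      · refine ⟨ε/2, by positivity, le_refl _, ?_, ?_⟩
        · exact ⟨mem_HS_of_lt hy₀.1 h1, mem_HS_of_lt hy₀.1 h1⟩
        · intro y' hy' hcase
          rcases hcase with h | h
          · rw [h] at h1; exact absurd h1 (lt_irrefl 1)
          · exact ⟨mem_HS_of_lt hy'.1 h, mem_HS_of_lt hy'.1 h⟩
    obtain ⟨η, hη, hηε, ⟨hmlo, hmhi⟩, hslice⟩ := hD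
    set xlo := p₀.1 - η
    set xhi := p₀.1 + η
    have hp₀pair : p₀ = (p₀.1, q₀.2) := by rw [← hp₀2]
    -- strict inequalities at the base point
    have hmp₀ : (p₀.1, q₀.2) ∈ HS U := by rw [← hp₀pair]; exact hp₀
    have hzlo : (h (xlo, q₀.2)).1 < q₀.1 := by
      have h5 : (h (xlo, q₀.2)).1 < (h (p₀.1, q₀.2)).1 :=
        hN.2.2.2 q₀.2 hy₀ hmlo hmp₀ (by simp only [xlo]; linarith)
      rw [← hp₀pair, hhp₀] at h5
      exact h5
    have hzhi : q₀.1 < (h (xhi, q₀.2)).1 := by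
      have h5 : (h (p₀.1, q₀.2)).1 < (h (xhi, q₀.2)).1 :=
        hN.2.2.2 q₀.2 hy₀ hmp₀ hmhi (by simp only [xhi]; linarith)
      rw [← hp₀pair, hhp₀] at h5
      exact h5
    -- eventual facts
    have E1 : ∀ᶠ q in nhdsWithin q₀ (HS V), q ∈ HS V := self_mem_nhdsWithin
    have E2 : ∀ᶠ q in nhdsWithin q₀ (HS V), (q₀.2 = 1 ∨ q.2 < 1) := by
      rcases eq_or_lt_of_le hy₀.2 with h1 | h1
      · exact Filter.Eventually.of_forall fun q => Or.inl h1
      · have : Filter.Tendsto (fun q : ℝ × ℝ => q.2) (nhdsWithin q₀ (HS V)) (nhds q₀.2) :=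
          (continuous_snd.tendsto q₀).mono_left nhdsWithin_le_nhds
        filter_upwards [this.eventually (eventually_lt_nhds h1)] with q hq
        exact Or.inr hq
    have Emem : ∀ᶠ q in nhdsWithin q₀ (HS V), (xlo, q.2) ∈ HS U ∧ (xhi, q.2) ∈ HS U := by
      filter_upwards [E1, E2] with q hq1 hq2
      exact hslice q.2 (snd_mem_of_HS hq1) hq2
    have tendlo : Filter.Tendsto (fun q : ℝ × ℝ => (h (xlo, q.2)).1) (nhdsWithin q₀ (HS V))
        (nhds ((h (xlo, q₀.2)).1)) := by
      have t1 : Filter.Tendsto (fun q : ℝ × ℝ => ((xlo, q.2) : ℝ × ℝ)) (nhdsWithin q₀ (HS V))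
          (nhdsWithin (xlo, q₀.2) (HS U)) := by
        rw [tendsto_nhdsWithin_iff]
        constructor
        · apply Filter.Tendsto.mono_left _ nhdsWithin_le_nhds
          exact (continuous_const.prodMk continuous_snd).tendsto q₀
        · filter_upwards [Emem] with q hq using hq.1
      have t2 : Filter.Tendsto h (nhdsWithin (xlo, q₀.2) (HS U)) (nhds (h (xlo, q₀.2))) :=
        hN.2.1 _ hmlo
      exact (continuous_fst.tendsto _).comp (t2.comp t1)
    have tendhi : Filter.Tendsto (fun q : ℝ × ℝ => (h (xhi, q.2)).1) (nhdsWithin q₀ (HS V))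
        (nhds ((h (xhi, q₀.2)).1)) := by
      have t1 : Filter.Tendsto (fun q : ℝ × ℝ => ((xhi, q.2) : ℝ × ℝ)) (nhdsWithin q₀ (HS V))
          (nhdsWithin (xhi, q₀.2) (HS U)) := by
        rw [tendsto_nhdsWithin_iff]
        constructor
        · apply Filter.Tendsto.mono_left _ nhdsWithin_le_nhds
          exact (continuous_const.prodMk continuous_snd).tendsto q₀
        · filter_upwards [Emem] with q hq using hq.2
      have t2 : Filter.Tendsto h (nhdsWithin (xhi, q₀.2) (HS U)) (nhds (h (xhi, q₀.2))) :=
        hN.2.1 _ hmhi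
      exact (continuous_fst.tendsto _).comp (t2.comp t1)
    have tfst : Filter.Tendsto (fun q : ℝ × ℝ => q.1) (nhdsWithin q₀ (HS V)) (nhds q₀.1) :=
      (continuous_fst.tendsto q₀).mono_left nhdsWithin_le_nhds
    have E3 : ∀ᶠ q in nhdsWithin q₀ (HS V), (h (xlo, q.2)).1 < q.1 := by
      have : Filter.Tendsto (fun q : ℝ × ℝ => q.1 - (h (xlo, q.2)).1) (nhdsWithin q₀ (HS V))
          (nhds (q₀.1 - (h (xlo, q₀.2)).1)) := tfst.sub tendlo
      filter_upwards [this.eventually (eventually_gt_nhds (by linarith : (0:ℝ) < q₀.1 - (h (xlo, q₀.2)).1))] with q hq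
      linarith
    have E4 : ∀ᶠ q in nhdsWithin q₀ (HS V), q.1 < (h (xhi, q.2)).1 := by
      have : Filter.Tendsto (fun q : ℝ × ℝ => (h (xhi, q.2)).1 - q.1) (nhdsWithin q₀ (HS V))
          (nhds ((h (xhi, q₀.2)).1 - q₀.1)) := tendhi.sub tfst
      filter_upwards [this.eventually (eventually_gt_nhds (by linarith : (0:ℝ) < (h (xhi, q₀.2)).1 - q₀.1))] with q hq
      linarith
    have E5 : ∀ᶠ q in nhdsWithin q₀ (HS V), dist q.2 q₀.2 < ε := by
      have : Filter.Tendsto (fun q : ℝ × ℝ => q.2) (nhdsWithin q₀ (HS V)) (nhds q₀.2) :=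
        (continuous_snd.tendsto q₀).mono_left nhdsWithin_le_nhds
      exact this (Metric.ball_mem_nhds _ hε)
    filter_upwards [E1, Emem, E3, E4, E5] with q hq1 hqm hq3 hq4 hq5
    -- now show dist (g q) p₀ < ε
    have hgq : g q ∈ HS U := hmaps hq1
    have hgq2 : (g q).2 = q.2 := hsnd q hq1
    have hgqpair : g q = ((g q).1, q.2) := by rw [← hgq2]
    have hy : q.2 ∈ Icc (0:ℝ) 1 := snd_mem_of_HS hq1
    have hgqm : ((g q).1, q.2) ∈ HS U := by rw [← hgqpair]; exact hgq
    have hfgq : (h ((g q).1, q.2)).1 = q.1 := by rw [← hgqpair, hgh q hq1]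
    -- xlo < (g q).1
    have hltlo : xlo < (g q).1 := by
      by_contra hle
      push_neg at hle
      rcases lt_or_eq_of_le hle with hlt' | heq
      · have h5 : (h ((g q).1, q.2)).1 < (h (xlo, q.2)).1 := hN.2.2.2 q.2 hy hgqm hqm.1 hlt'
        rw [hfgq] at h5
        linarith
      · have h5 : (h (xlo, q.2)).1 = q.1 := by rw [heq] at hfgq; exact hfgq
        linarith
    have hlthi : (g q).1 < xhi := by
      by_contra hle
      push_neg at hle
      rcases lt_or_eq_of_le hle with hlt' | heq
      · have h5 : (h (xhi, q.2)).1 < (h ((g q).1, q.2)).1 := hN.2.2.2 q.2 hy hqm.2 hgqm hlt'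
        rw [hfgq] at h5
        linarith
      · have h5 : (h (xhi, q.2)).1 = q.1 := by rw [← heq] at hfgq; exact hfgq
        linarith
    have hd1 : dist (g q).1 p₀.1 < ε := by
      rw [Real.dist_eq, abs_sub_lt_iff]
      simp only [xlo, xhi] at hltlo hlthi
      constructor <;> linarith
    have hd2 : dist (g q).2 p₀.2 < ε := by
      rw [hgq2, hp₀2]
      exact hq5
    rw [Prod.dist_eq]
    exact max_lt hd1 hd2
  exact ⟨⟨hinv.symm.bijOn hmaps hN.1.mapsTo, hcont, hsnd, hmono⟩, hcont⟩

lemma tauR_sigR {z : ℝ} (hz : |z| < 1) : tauR (sigR z) = z := by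
  have h1 : 0 < 1 - |z| := by linarith
  rw [sigR, tauR, abs_div, abs_of_pos h1]
  have h2 : 1 + |z| / (1 - |z|) = 1 / (1 - |z|) := by field_simp; ring
  rw [h2]
  field_simp

lemma sigR_continuousOn : ContinuousOn sigR (Ioo (-1 : ℝ) 1) := by
  intro z hz
  have h1 : 0 < 1 - |z| := by
    have := abs_lt.2 ⟨hz.1, hz.2⟩
    linarith
  apply ContinuousAt.continuousWithinAt
  apply ContinuousAt.div continuousAt_id
  · exact (continuous_const.sub continuous_abs).continuousAt
  · linarith

lemma sigR_strictMonoOn : StrictMonoOn sigR (Ioo (-1 : ℝ) 1) := by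
  intro z1 hz1 z2 hz2 hlt
  by_contra hle
  push_neg at hle
  have h1 : tauR (sigR z2) ≤ tauR (sigR z1) := by
    rcases lt_or_eq_of_le hle with h | h
    · exact (tauR_strictMono h).le
    · rw [h]
  rw [tauR_sigR (abs_lt.2 ⟨hz1.1, hz1.2⟩), tauR_sigR (abs_lt.2 ⟨hz2.1, hz2.2⟩)] at h1
  linarith

lemma tauR_image_Ioo_subset {U : Set ℝ} : tauR '' U ⊆ Ioo (-1 : ℝ) 1 := by
  rintro z ⟨x, -, rfl⟩; exact tauR_mem_Ioo x

lemma isOpen_tauR_image {U : Set ℝ} (hU : IsOpen U) : IsOpen (tauR '' U) := by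
  rw [isOpen_iff_mem_nhds]
  rintro z ⟨x, hx, rfl⟩
  rcases Metric.isOpen_iff.1 hU x hx with ⟨δ, hδ, hball⟩
  have hsub : Ioo (x - δ/2) (x + δ/2) ⊆ U := by
    intro t ht
    apply hball
    rw [Metric.mem_ball, Real.dist_eq, abs_sub_lt_iff]
    rcases ht with ⟨h1, h2⟩
    constructor <;> linarith
  have h1 : Ioo (tauR (x - δ/2)) (tauR (x + δ/2)) ⊆ tauR '' U := by
    intro w hw
    have := intermediate_value_Ioo (f := tauR) (by linarith : x - δ/2 ≤ x + δ/2)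
      tauR_continuous.continuousOn
    rcases this hw with ⟨t, ht, rfl⟩
    exact mem_image_of_mem _ (hsub ht)
  exact Filter.mem_of_superset (Ioo_mem_nhds (tauR_strictMono (by linarith))
    (tauR_strictMono (by linarith))) h1

/-- Stage 1: squeeze the strip onto `ℝ × [0,1) ∪ (-1,1) × {1}`. -/
def T1 (p : ℝ × ℝ) : ℝ × ℝ := ((1 - p.2) * p.1 + p.2 * tauR p.1, p.2)

lemma T1_at_one (x : ℝ) : T1 (x, 1) = (tauR x, 1) := by
  simp [T1]

lemma T1_mono2 {y : ℝ} (hy : y ∈ Icc (0:ℝ) 1) : StrictMono (fun x => (T1 (x, y)).1) := by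
  intro x1 x2 hlt
  simp only [T1]
  have h1 : tauR x1 < tauR x2 := tauR_strictMono hlt
  rcases lt_or_eq_of_le hy.2 with h | h
  · nlinarith [hy.1]
  · rw [← h]; nlinarith
lemma nice_T1 {U : Set ℝ} (hU : IsOpen U) : Nice U (tauR '' U) T1 := by
  have hsnd : ∀ p ∈ HS U, (T1 p).2 = p.2 := fun p _ => rfl
  have hmono : ∀ y ∈ Icc (0:ℝ) 1, StrictMonoOn (fun x => (T1 (x, y)).1) {x | (x, y) ∈ HS U} :=
    fun y hy => (T1_mono2 hy).strictMonoOn _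
  refine ⟨⟨?_, ?_, ?_⟩, ?_, hsnd, hmono⟩
  · -- mapsTo
    intro p hp
    rcases mem_HS.1 hp with ⟨h0, h1⟩ | ⟨hu, h1⟩
    · exact mem_HS_of_lt (p := T1 p) h0 h1
    · have : p = (p.1, (1:ℝ)) := by rw [← h1]
      rw [this, T1_at_one]
      exact mem_HS_one (mem_image_of_mem _ hu)
  · -- injOn
    intro p hp q hq heq
    have h2 : (T1 p).2 = (T1 q).2 := congrArg Prod.snd heq
    rw [hsnd p hp, hsnd q hq] at h2
    have h1 : (T1 (p.1, p.2)).1 = (T1 (q.1, p.2)).1 := by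
      conv_rhs => rw [h2]
      exact congrArg Prod.fst heq
    have := (T1_mono2 (snd_mem_of_HS hp)).injective h1
    exact Prod.ext this h2
  · -- surjOn
    intro q hq
    rcases mem_HS.1 hq with ⟨h0, h1⟩ | ⟨hu, h1⟩
    · -- find x with (1-y) x + y tau x = q.1, y := q.2
      set y := q.2 with hy
      have hy1 : 1 - y > 0 := by linarith
      set xlo := (q.1 - 1) / (1 - y) with hxlo
      set xhi := (q.1 + 1) / (1 - y) with hxhi
      have hle : xlo ≤ xhi := by
        rw [hxlo, hxhi, div_le_div_iff₀ hy1 hy1]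
        nlinarith
      have hconts : ContinuousOn (fun x => (T1 (x, y)).1) (Icc xlo xhi) := by
        show ContinuousOn (fun x => (1 - y) * x + y * tauR x) (Icc xlo xhi)
        exact ((continuous_const.mul continuous_id).add
          (continuous_const.mul tauR_continuous)).continuousOn
      have hlo : (T1 (xlo, y)).1 ≤ q.1 := by
        show (1 - y) * xlo + y * tauR xlo ≤ q.1
        have h2 : (1 - y) * xlo = q.1 - 1 := by rw [hxlo]; field_simp
        have h3 : y * tauR xlo ≤ y := by
          nlinarith [abs_tauR_lt_one xlo, abs_le.1 (le_of_lt (abs_tauR_lt_one xlo)), h0]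
        linarith
      have hhi : q.1 ≤ (T1 (xhi, y)).1 := by
        show q.1 ≤ (1 - y) * xhi + y * tauR xhi
        have h2 : (1 - y) * xhi = q.1 + 1 := by rw [hxhi]; field_simp
        have h3 : -y ≤ y * tauR xhi := by
          nlinarith [abs_le.1 (le_of_lt (abs_tauR_lt_one xhi)), h0]
        linarith
      have := intermediate_value_Icc hle hconts ⟨hlo, hhi⟩
      rcases this with ⟨x, -, hx⟩
      exact ⟨(x, y), mem_HS_of_lt h0 h1, Prod.ext hx rfl⟩
    · rcases hu with ⟨x, hxU, hxz⟩
      refine ⟨(x, 1), mem_HS_one hxU, ?_⟩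
      rw [T1_at_one, hxz]
      exact Prod.ext rfl h1.symm
  · -- continuity
    apply Continuous.continuousOn
    show Continuous fun p : ℝ × ℝ => (((1 - p.2) * p.1 + p.2 * tauR p.1 : ℝ), p.2)
    exact (((continuous_const.sub continuous_snd).mul continuous_fst).add
      (continuous_snd.mul (tauR_continuous.comp continuous_fst))).prodMk continuous_snd


/-- The squeezing profile on a component of length ℓ, at height y. -/
def phiC (l u y : ℝ) : ℝ :=
  if y = 1 then u * (1 - y/2) + y * l/4
  else max (min (u / (1-y)) (u * (1 - y/2) + y * l/4)) (l + (u - l) / (1-y))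

section phiC
variable {l u y : ℝ}

lemma phiC_one (l u : ℝ) : phiC l u 1 = u/2 + l/4 := by
  rw [phiC, if_pos rfl]; ring

lemma phiC_zero (l u : ℝ) : phiC l u 0 = u := by
  rw [phiC, if_neg (by norm_num : (0:ℝ) ≠ 1)]
  norm_num

lemma phiC_pos (hl : 0 < l) (hu : 0 < u) (hy0 : 0 ≤ y) (hy1 : y ≤ 1) : 0 < phiC l u y := by
  rcases eq_or_lt_of_le hy1 with h | h
  · rw [h, phiC_one]; nlinarith
  · rw [phiC, if_neg (ne_of_lt h)]
    have h1 : 0 < 1 - y := by linarith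
    apply lt_max_of_lt_left
    apply lt_min
    · positivity
    · nlinarith

lemma phiC_lt (hl : 0 < l) (hu : 0 < u) (hul : u < l) (hy0 : 0 ≤ y) (hy1 : y ≤ 1) :
    phiC l u y < l := by
  rcases eq_or_lt_of_le hy1 with h | h
  · rw [h, phiC_one]; nlinarith
  · rw [phiC, if_neg (ne_of_lt h)]
    have h1 : 0 < 1 - y := by linarith
    apply max_lt
    · apply min_lt_of_right_lt; nlinarith
    · have : (u - l) / (1 - y) < 0 := div_neg_of_neg_of_pos (by linarith) h1
      linarith

lemma phiC_strictMono (hl : 0 < l) (hy0 : 0 ≤ y) (hy1 : y ≤ 1) {u1 u2 : ℝ} (h : u1 < u2) :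
    phiC l u1 y < phiC l u2 y := by
  rcases eq_or_lt_of_le hy1 with hc | hc
  · rw [hc, phiC_one, phiC_one]; nlinarith
  · rw [phiC, if_neg (ne_of_lt hc), phiC, if_neg (ne_of_lt hc)]
    have h1 : 0 < 1 - y := by linarith
    apply max_lt_max
    · apply min_lt_min
      · rw [div_lt_div_iff₀ h1 h1]; nlinarith
      · nlinarith
    · have : (u1 - l) / (1-y) < (u2 - l) / (1-y) := by
        rw [div_lt_div_iff₀ h1 h1]; nlinarith
      linarith

lemma phiC_le_A (hl : 0 < l) (hu : 0 < u) (hul : u ≤ l) (hy0 : 0 ≤ y) (hy1 : y < 1) :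
    phiC l u y ≤ u / (1-y) := by
  rw [phiC, if_neg (ne_of_lt hy1)]
  have h1 : 0 < 1 - y := by linarith
  have hs1 : 1 ≤ 1 / (1-y) := by rw [le_div_iff₀ h1]; linarith
  have hC : l + (u - l) / (1-y) ≤ u := by
    have : (u - l) / (1-y) ≤ (u - l) := by
      rw [div_le_iff₀ h1]; nlinarith
    linarith
  have hA : u ≤ u / (1-y) := by
    rw [le_div_iff₀ h1]; nlinarith
  exact max_le ((min_le_left _ _).trans (le_refl _)) (hC.trans hA)

lemma phiC_ge_half (hl : 0 < l) (hu : 0 < u) (hy0 : 0 ≤ y) (hy1 : y ≤ 1) :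
    u * (1 - y/2) ≤ phiC l u y := by
  rcases eq_or_lt_of_le hy1 with h | h
  · rw [h, phiC_one]; nlinarith
  · rw [phiC, if_neg (ne_of_lt h)]
    have h1 : 0 < 1 - y := by linarith
    apply le_max_of_le_left
    apply le_min
    · rw [le_div_iff₀ h1]
      nlinarith [mul_nonneg hu.le hy0, mul_nonneg (mul_nonneg hu.le hy0) hy0]
    · nlinarith

lemma phiC_ge_C (hy1 : y < 1) : l + (u - l) / (1-y) ≤ phiC l u y := by
  rw [phiC, if_neg (ne_of_lt hy1)]
  exact le_max_right _ _

/-- Near the top, `phiC` agrees with the middle affine map. -/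
lemma phiC_eq_B {u1 u2 : ℝ} (hl : 0 < l) (hu1 : 0 < u1) (h1u : u1 ≤ u) (hu2 : u ≤ u2)
    (hu2l : u2 < l) (hy0 : 0 ≤ y) (hy1 : y ≤ 1) (hq1 : l * (1-y) ≤ u1) (hq2 : l * (1-y) ≤ l - u2) :
    phiC l u y = u * (1 - y/2) + y * l/4 := by
  rcases eq_or_lt_of_le hy1 with h | h
  · rw [h, phiC, if_pos rfl]
  · rw [phiC, if_neg (ne_of_lt h)]
    have h1 : 0 < 1 - y := by linarith
    have hB0 : 0 ≤ u * (1 - y/2) + y * l/4 := by nlinarith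
    have hBl : u * (1 - y/2) + y * l/4 ≤ l := by nlinarith
    have hA : u * (1 - y/2) + y * l/4 ≤ u / (1-y) := by
      have : l ≤ u / (1-y) := by
        rw [le_div_iff₀ h1]; nlinarith
      linarith
    have hC : l + (u - l) / (1-y) ≤ u * (1 - y/2) + y * l/4 := by
      have : (u - l) / (1-y) ≤ -l := by
        rw [div_le_iff₀ h1]; nlinarith
      linarith
    rw [min_eq_right hA, max_eq_left hC]

lemma phiC_contOn (hy1 : y < 1) : Continuous (fun u => phiC l u y) := by
  have : (fun u => phiC l u y) = fun u =>
      max (min (u / (1-y)) (u * (1 - y/2) + y * l/4)) (l + (u - l) / (1-y)) := by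
    funext u; rw [phiC, if_neg (ne_of_lt hy1)]
  rw [this]
  exact ((continuous_id.div_const (1-y)).min
      ((continuous_id.mul continuous_const).add continuous_const)).max
    (continuous_const.add ((continuous_id.sub continuous_const).div_const (1-y)))

lemma phiC_surj (hl : 0 < l) (hy0 : 0 ≤ y) (hy1 : y < 1) {v : ℝ} (hv : v ∈ Ioo 0 l) :
    ∃ u ∈ Ioo 0 l, phiC l u y = v := by
  obtain ⟨hv0, hvl⟩ := hv
  have h1 : 0 < 1 - y := by linarith
  set u1 := v * (1-y) / 2 with hu1def
  set u2 := l - (l - v) * (1-y) / 2 with hu2def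
  have hu1pos : 0 < u1 := by positivity
  have hu1l : u1 < l := by
    rw [hu1def]; nlinarith [mul_nonneg hv0.le hy0]
  have hu2l : u2 < l := by
    rw [hu2def]; nlinarith [mul_pos (show (0:ℝ) < l - v by linarith) h1]
  have h12 : u1 ≤ u2 := by
    rw [hu1def, hu2def]; nlinarith [mul_nonneg hl.le hy0]
  have hlo : phiC l u1 y ≤ v := by
    have := phiC_le_A hl hu1pos (le_of_lt hu1l) hy0 hy1
    have h2 : u1 / (1-y) = v / 2 := by rw [hu1def]; field_simp
    rw [h2] at this
    linarith
  have hhi : v ≤ phiC l u2 y := by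
    have := phiC_ge_C (l := l) (u := u2) hy1
    have h2 : l + (u2 - l) / (1-y) = (l + v) / 2 := by
      rw [hu2def]; field_simp; ring
    rw [h2] at this
    linarith
  have := intermediate_value_Icc h12 (phiC_contOn hy1).continuousOn ⟨hlo, hhi⟩
  rcases this with ⟨u, hu, hphiu⟩
  exact ⟨u, ⟨lt_of_lt_of_le hu1pos hu.1, lt_of_le_of_lt hu.2 hu2l⟩, hphiu⟩

end phiC
-- ===== new content: component endpoints =====

def aW (W : Set ℝ) (x : ℝ) : ℝ := sSup (Wᶜ ∩ Iic x)
def bW (W : Set ℝ) (x : ℝ) : ℝ := sInf (Wᶜ ∩ Ici x)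

def mI (W : Set ℝ) (x : ℝ) : ℝ := aW W x + (bW W x - aW W x)/4
def MI (W : Set ℝ) (x : ℝ) : ℝ := aW W x + 3*(bW W x - aW W x)/4

def VW (W : Set ℝ) : Set ℝ := ⋃ x ∈ W, Ioo (mI W x) (MI W x)

open Classical in
def G2 (W : Set ℝ) (p : ℝ × ℝ) : ℝ × ℝ :=
  if p.1 ∈ W then (aW W p.1 + phiC (bW W p.1 - aW W p.1) (p.1 - aW W p.1) p.2, p.2) else p

section comps
variable {W : Set ℝ} {x : ℝ}

lemma neg_one_notW (hWs : W ⊆ Ioo (-1 : ℝ) 1) : (-1 : ℝ) ∈ Wᶜ :=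
  fun h => absurd (hWs h).1 (lt_irrefl _)
lemma one_notW (hWs : W ⊆ Ioo (-1 : ℝ) 1) : (1 : ℝ) ∈ Wᶜ :=
  fun h => absurd (hWs h).2 (lt_irrefl _)

lemma aW_bddAbove (W : Set ℝ) (x : ℝ) : BddAbove (Wᶜ ∩ Iic x) := ⟨x, fun z hz => hz.2⟩
lemma bW_bddBelow (W : Set ℝ) (x : ℝ) : BddBelow (Wᶜ ∩ Ici x) := ⟨x, fun z hz => hz.2⟩

lemma aW_ne (hWs : W ⊆ Ioo (-1 : ℝ) 1) (hx : x ∈ W) : (Wᶜ ∩ Iic x).Nonempty :=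
  ⟨-1, neg_one_notW hWs, le_of_lt (hWs hx).1⟩
lemma bW_ne (hWs : W ⊆ Ioo (-1 : ℝ) 1) (hx : x ∈ W) : (Wᶜ ∩ Ici x).Nonempty :=
  ⟨1, one_notW hWs, le_of_lt (hWs hx).2⟩

lemma aW_mem (hW : IsOpen W) (hWs : W ⊆ Ioo (-1 : ℝ) 1) (hx : x ∈ W) : aW W x ∈ Wᶜ ∩ Iic x :=
  ((hW.isClosed_compl.inter isClosed_Iic).csSup_mem (aW_ne hWs hx) (aW_bddAbove W x))
lemma bW_mem (hW : IsOpen W) (hWs : W ⊆ Ioo (-1 : ℝ) 1) (hx : x ∈ W) : bW W x ∈ Wᶜ ∩ Ici x :=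
  ((hW.isClosed_compl.inter isClosed_Ici).csInf_mem (bW_ne hWs hx) (bW_bddBelow W x))

lemma aW_lt (hW : IsOpen W) (hWs : W ⊆ Ioo (-1 : ℝ) 1) (hx : x ∈ W) : aW W x < x :=
  lt_of_le_of_ne (aW_mem hW hWs hx).2
    (fun h => absurd hx (by rw [← h]; exact (aW_mem hW hWs hx).1))
lemma bW_gt (hW : IsOpen W) (hWs : W ⊆ Ioo (-1 : ℝ) 1) (hx : x ∈ W) : x < bW W x :=
  lt_of_le_of_ne (bW_mem hW hWs hx).2
    (fun h => absurd hx (by rw [h]; exact (bW_mem hW hWs hx).1))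

lemma notW_le_aW (hx : x ∈ W) {z : ℝ} (hz : z ∈ Wᶜ) (hzx : z ≤ x) : z ≤ aW W x :=
  le_csSup (aW_bddAbove W x) ⟨hz, hzx⟩
lemma bW_le_notW (hx : x ∈ W) {z : ℝ} (hz : z ∈ Wᶜ) (hzx : x ≤ z) : bW W x ≤ z :=
  csInf_le (bW_bddBelow W x) ⟨hz, hzx⟩

lemma aW_ge (hWs : W ⊆ Ioo (-1 : ℝ) 1) (hx : x ∈ W) : (-1 : ℝ) ≤ aW W x :=
  notW_le_aW hx (neg_one_notW hWs) (le_of_lt (hWs hx).1)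
lemma bW_le (hWs : W ⊆ Ioo (-1 : ℝ) 1) (hx : x ∈ W) : bW W x ≤ 1 :=
  bW_le_notW hx (one_notW hWs) (le_of_lt (hWs hx).2)

lemma Ioo_aW_bW_sub (hx : x ∈ W) : Ioo (aW W x) (bW W x) ⊆ W := by
  intro t ht
  by_contra htW
  rcases le_or_gt t x with h | h
  · exact absurd (notW_le_aW hx htW h) (not_le.2 ht.1)
  · exact absurd (bW_le_notW hx htW h.le) (not_le.2 ht.2)

lemma loc_const (hW : IsOpen W) (hWs : W ⊆ Ioo (-1 : ℝ) 1) (hx : x ∈ W) {x' : ℝ}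
    (hx' : x' ∈ Ioo (aW W x) (bW W x)) :
    aW W x' = aW W x ∧ bW W x' = bW W x := by
  have hsub := Ioo_aW_bW_sub hx
  constructor
  · have : Wᶜ ∩ Iic x' = Wᶜ ∩ Iic x := by
      ext z
      refine ⟨fun ⟨hz, hzle⟩ => ⟨hz, ?_⟩, fun ⟨hz, hzle⟩ => ⟨hz, ?_⟩⟩
      · by_contra hgt
        rw [mem_Iic] at hgt
        push_neg at hgt
        exact hz (hsub ⟨lt_of_le_of_lt (aW_mem hW hWs hx).2 hgt, lt_of_le_of_lt hzle hx'.2⟩)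
      · by_contra hgt
        rw [mem_Iic] at hgt
        push_neg at hgt
        exact hz (hsub ⟨lt_of_lt_of_le hx'.1 hgt.le, lt_of_le_of_lt hzle (bW_gt hW hWs hx)⟩)
    rw [aW, aW, this]
  · have : Wᶜ ∩ Ici x' = Wᶜ ∩ Ici x := by
      ext z
      refine ⟨fun ⟨hz, hzle⟩ => ⟨hz, ?_⟩, fun ⟨hz, hzle⟩ => ⟨hz, ?_⟩⟩
      · by_contra hgt
        rw [mem_Ici] at hgt
        push_neg at hgt
        exact hz (hsub ⟨lt_of_lt_of_le hx'.1 hzle, lt_trans hgt (bW_gt hW hWs hx)⟩)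
      · by_contra hgt
        rw [mem_Ici] at hgt
        push_neg at hgt
        exact hz (hsub ⟨(aW_lt hW hWs hx).trans_le hzle, lt_trans hgt hx'.2⟩)
    rw [bW, bW, this]

-- ===== G2 basic values =====

lemma G2_of_mem {p : ℝ × ℝ} (hp : p.1 ∈ W) :
    G2 W p = (aW W p.1 + phiC (bW W p.1 - aW W p.1) (p.1 - aW W p.1) p.2, p.2) := by
  rw [G2, if_pos hp]

lemma G2_of_not {p : ℝ × ℝ} (hp : p.1 ∉ W) : G2 W p = p := by
  rw [G2, if_neg hp]

lemma G2_snd (W : Set ℝ) (p : ℝ × ℝ) : (G2 W p).2 = p.2 := by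
  by_cases hp : p.1 ∈ W
  · rw [G2_of_mem hp]
  · rw [G2_of_not hp]

lemma G2_mem_Ioo (hW : IsOpen W) (hWs : W ⊆ Ioo (-1 : ℝ) 1) (hx : x ∈ W) {y : ℝ}
    (hy0 : 0 ≤ y) (hy1 : y ≤ 1) :
    (G2 W (x, y)).1 ∈ Ioo (aW W x) (bW W x) := by
  rw [G2_of_mem hx]
  have h1 : aW W x < x := aW_lt hW hWs hx
  have h2 : x < bW W x := bW_gt hW hWs hx
  constructor
  · simp only
    have := phiC_pos (l := bW W x - aW W x) (u := x - aW W x) (by linarith) (by linarith) hy0 hy1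
    linarith
  · simp only
    have := phiC_lt (l := bW W x - aW W x) (u := x - aW W x) (by linarith) (by linarith)
      (by linarith) hy0 hy1
    linarith

lemma G2_strictMono (hW : IsOpen W) (hWs : W ⊆ Ioo (-1 : ℝ) 1) {y : ℝ}
    (hy0 : 0 ≤ y) (hy1 : y ≤ 1) : StrictMono (fun x => (G2 W (x, y)).1) := by
  intro x1 x2 hlt
  simp only
  by_cases h1 : x1 ∈ W <;> by_cases h2 : x2 ∈ W
  · -- both in W
    have ha1 : aW W x1 < x1 := aW_lt hW hWs h1
    have hb1 : x1 < bW W x1 := bW_gt hW hWs h1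
    have ha2 : aW W x2 < x2 := aW_lt hW hWs h2
    have hb2 : x2 < bW W x2 := bW_gt hW hWs h2
    rcases lt_or_ge x2 (bW W x1) with hc | hc
    · -- same component
      have hx2mem : x2 ∈ Ioo (aW W x1) (bW W x1) := ⟨lt_trans ha1 hlt, hc⟩
      obtain ⟨hae, hbe⟩ := loc_const hW hWs h1 hx2mem
      rw [G2_of_mem h1, G2_of_mem h2]
      simp only [hae, hbe]
      have := phiC_strictMono (l := bW W x1 - aW W x1) (by linarith) hy0 hy1
        (sub_lt_sub_right hlt (aW W x1))
      linarith
    · -- different components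
      have hkey : bW W x1 ≤ aW W x2 := notW_le_aW h2 (bW_mem hW hWs h1).1 hc
      have hg1 := G2_mem_Ioo hW hWs h1 hy0 hy1
      have hg2 := G2_mem_Ioo hW hWs h2 hy0 hy1
      calc (G2 W (x1, y)).1 < bW W x1 := hg1.2
        _ ≤ aW W x2 := hkey
        _ < (G2 W (x2, y)).1 := hg2.1
  · -- x1 ∈ W, x2 ∉ W
    rw [G2_of_not (p := (x2, y)) h2]
    have hkey : bW W x1 ≤ x2 := bW_le_notW h1 h2 hlt.le
    have hg1 := G2_mem_Ioo hW hWs h1 hy0 hy1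
    calc (G2 W (x1, y)).1 < bW W x1 := hg1.2
      _ ≤ x2 := hkey
  · -- x1 ∉ W, x2 ∈ W
    rw [G2_of_not (p := (x1, y)) h1]
    have hkey : x1 ≤ aW W x2 := notW_le_aW h2 h1 hlt.le
    have hg2 := G2_mem_Ioo hW hWs h2 hy0 hy1
    calc x1 ≤ aW W x2 := hkey
      _ < (G2 W (x2, y)).1 := hg2.1
  · rw [G2_of_not (p := (x1, y)) h1, G2_of_not (p := (x2, y)) h2]
    exact hlt

lemma mI_MI_aux (hW : IsOpen W) (hWs : W ⊆ Ioo (-1 : ℝ) 1) (hx : x ∈ W) :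
    aW W x < mI W x ∧ mI W x < MI W x ∧ MI W x < bW W x := by
  have h1 : aW W x < x := aW_lt hW hWs hx
  have h2 : x < bW W x := bW_gt hW hWs hx
  refine ⟨?_, ?_, ?_⟩
  · unfold mI; linarith
  · unfold mI MI; linarith
  · unfold MI; linarith

lemma G2_one_mem (hW : IsOpen W) (hWs : W ⊆ Ioo (-1 : ℝ) 1) (hx : x ∈ W) :
    (G2 W (x, 1)).1 ∈ Ioo (mI W x) (MI W x) := by
  rw [G2_of_mem hx]
  have h1 : aW W x < x := aW_lt hW hWs hx
  have h2 : x < bW W x := bW_gt hW hWs hx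
  constructor
  · show mI W x < aW W x + phiC (bW W x - aW W x) (x - aW W x) 1
    rw [phiC_one]
    unfold mI
    linarith
  · show aW W x + phiC (bW W x - aW W x) (x - aW W x) 1 < MI W x
    rw [phiC_one]
    unfold MI
    linarith

lemma VW_sub (hW : IsOpen W) (hWs : W ⊆ Ioo (-1 : ℝ) 1) : VW W ⊆ W := by
  intro z hz
  rw [VW, mem_iUnion₂] at hz
  obtain ⟨x, hx, hz⟩ := hz
  have h := mI_MI_aux hW hWs hx
  exact Ioo_aW_bW_sub hx ⟨lt_trans h.1 hz.1, lt_trans hz.2 h.2.2⟩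

lemma isOpen_VW (W : Set ℝ) : IsOpen (VW W) :=
  isOpen_biUnion fun _ _ => isOpen_Ioo

lemma nice_G2 (hW : IsOpen W) (hWs : W ⊆ Ioo (-1 : ℝ) 1) : Nice W (VW W) (G2 W) := by
  have hsnd : ∀ p ∈ HS W, (G2 W p).2 = p.2 := fun p _ => G2_snd W p
  have hmono : ∀ y ∈ Icc (0:ℝ) 1, StrictMonoOn (fun x => (G2 W (x, y)).1) {x | (x, y) ∈ HS W} :=
    fun y hy => (G2_strictMono hW hWs hy.1 hy.2).strictMonoOn _
  refine ⟨⟨?_, ?_, ?_⟩, ?_, hsnd, hmono⟩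
  · -- mapsTo
    intro p hp
    rcases mem_HS.1 hp with ⟨h0, h1⟩ | ⟨hu, h1⟩
    · apply mem_HS_of_lt <;> rw [G2_snd] <;> assumption
    · have hpe : p = (p.1, (1:ℝ)) := by rw [← h1]
      rw [hpe]
      have := G2_one_mem hW hWs hu
      have hmem : (G2 W (p.1, 1)).1 ∈ VW W := by
        rw [VW, mem_iUnion₂]
        exact ⟨p.1, hu, this⟩
      have hsnd1 : (G2 W (p.1, (1:ℝ))).2 = 1 := G2_snd W _
      have heq : G2 W (p.1, (1:ℝ)) = ((G2 W (p.1, (1:ℝ))).1, (1:ℝ)) := Prod.ext rfl hsnd1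
      rw [heq]
      exact mem_HS_one hmem
  · -- injOn
    intro p hp q hq heq
    have h2 : p.2 = q.2 := by
      rw [← G2_snd W p, ← G2_snd W q, heq]
    have hy := snd_mem_of_HS hp
    have h1 : (fun x => (G2 W (x, p.2)).1) p.1 = (fun x => (G2 W (x, p.2)).1) q.1 := by
      simp only
      rw [Prod.mk.eta, show ((q.1, p.2) : ℝ × ℝ) = (q.1, q.2) by rw [h2], Prod.mk.eta, heq]
    have := (G2_strictMono hW hWs hy.1 hy.2).injective h1
    exact Prod.ext this h2
  · -- surjOn
    intro q hq
    rcases mem_HS.1 hq with ⟨h0, h1⟩ | ⟨hu, h1⟩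
    · by_cases hz : q.1 ∈ W
      · -- use phiC_surj on the component of q.1
        have ha : aW W q.1 < q.1 := aW_lt hW hWs hz
        have hb : q.1 < bW W q.1 := bW_gt hW hWs hz
        obtain ⟨u, hu, hphiu⟩ := phiC_surj (l := bW W q.1 - aW W q.1) (by linarith) h0 h1
          (v := q.1 - aW W q.1) ⟨by linarith, by linarith⟩
        set xx := aW W q.1 + u with hxx
        have hxxmem : xx ∈ Ioo (aW W q.1) (bW W q.1) := by
          refine ⟨by rw [hxx]; linarith [hu.1], by rw [hxx]; linarith [hu.2]⟩
        have hxxW : xx ∈ W := Ioo_aW_bW_sub hz hxxmem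
        obtain ⟨hae, hbe⟩ := loc_const hW hWs hz hxxmem
        refine ⟨(xx, q.2), mem_HS_of_lt (p := (xx, q.2)) h0 h1, ?_⟩
        rw [G2_of_mem (p := (xx, q.2)) hxxW]
        dsimp only
        rw [hae, hbe]
        have hueq : xx - aW W q.1 = u := by rw [hxx]; ring
        rw [hueq, hphiu]
        have : aW W q.1 + (q.1 - aW W q.1) = q.1 := by ring
        rw [this, Prod.mk.eta]
      · refine ⟨(q.1, q.2), mem_HS_of_lt (p := (q.1, q.2)) h0 h1, ?_⟩
        rw [G2_of_not (p := (q.1, q.2)) hz, Prod.mk.eta]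
    · -- q.2 = 1, q.1 ∈ VW W
      rw [VW, mem_iUnion₂] at hu
      obtain ⟨x, hx, hq1⟩ := hu
      have ha : aW W x < x := aW_lt hW hWs hx
      have hb : x < bW W x := bW_gt hW hWs hx
      set l := bW W x - aW W x with hldef
      set u := 2 * (q.1 - aW W x - l/4) with hudef
      have hu1 : 0 < u := by
        rw [hudef]
        have := hq1.1
        rw [mI] at this
        simp only [← hldef] at this
        linarith
      have hu2 : u < l := by
        rw [hudef]
        have := hq1.2
        rw [MI] at this
        simp only [← hldef] at this
        linarith
      set xx := aW W x + u with hxx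
      have hxxmem : xx ∈ Ioo (aW W x) (bW W x) := by
        refine ⟨by rw [hxx]; linarith, by rw [hxx]; linarith⟩
      have hxxW : xx ∈ W := Ioo_aW_bW_sub hx hxxmem
      obtain ⟨hae, hbe⟩ := loc_const hW hWs hx hxxmem
      refine ⟨(xx, 1), mem_HS_one hxxW, ?_⟩
      rw [G2_of_mem (p := (xx, 1)) hxxW]
      dsimp only
      rw [hae, hbe, ← hldef]
      have hueq : xx - aW W x = u := by rw [hxx]; ring
      rw [hueq, phiC_one]
      have hq1eq : aW W x + (u/2 + l/4) = q.1 := by rw [hudef]; ring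
      rw [hq1eq]
      exact Prod.ext rfl h1.symm
  · -- continuity
    have hfst : ContinuousOn (fun p => (G2 W p).1) (HS W) := by
      intro p₀ hp₀
      have hy₀ := snd_mem_of_HS hp₀
      by_cases hx₀ : p₀.1 ∈ W
      · set a := aW W p₀.1 with hadef
        set b := bW W p₀.1 with hbdef
        have ha : a < p₀.1 := aW_lt hW hWs hx₀
        have hb : p₀.1 < b := bW_gt hW hWs hx₀
        rcases eq_or_lt_of_le hy₀.2 with h1 | h1
        · -- y₀ = 1 : near the top, G2 agrees with the affine middle map
          set l := b - a with hldef
          set u0 := p₀.1 - a with hu0def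
          have hu0 : 0 < u0 := by rw [hu0def]; linarith
          have hu0l : u0 < l := by rw [hu0def, hldef]; linarith
          have hl : 0 < l := by rw [hldef]; linarith
          set u1 := u0/2 with hu1def
          set u2 := (u0 + l)/2 with hu2def
          have hu1pos : 0 < u1 := by rw [hu1def]; linarith
          have hu2l : u2 < l := by rw [hu2def]; linarith
          set eps := min (u1/l) ((l - u2)/l) with hepsdef
          have heps : 0 < eps := by
            rw [hepsdef]
            apply lt_min <;> apply div_pos <;> linarith
          set N := Ioo (a + u1) (a + u2) ×ˢ Ioi (1 - eps) with hNdef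
          have hNopen : IsOpen N := isOpen_Ioo.prod isOpen_Ioi
          have hp₀N : p₀ ∈ N := by
            rw [hNdef]
            refine ⟨⟨?_, ?_⟩, ?_⟩
            · show a + u1 < p₀.1
              rw [hu1def, hu0def]; linarith
            · show p₀.1 < a + u2
              rw [hu2def, hu0def]; linarith
            · show 1 - eps < p₀.2
              rw [← h1]; linarith
          set FB := fun p : ℝ × ℝ => a + ((p.1 - a) * (1 - p.2/2) + p.2 * l/4) with hFBdef
          have hFBc : Continuous FB := by
            rw [hFBdef]
            exact continuous_const.add ((((continuous_fst.sub continuous_const).mul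
              (continuous_const.sub (continuous_snd.div_const 2))).add
              ((continuous_snd.mul continuous_const).div_const 4)))
          have hEq : ∀ p ∈ N ∩ HS W, (G2 W p).1 = FB p := by
            rintro p ⟨hpN, hpHS⟩
            rw [hNdef] at hpN
            obtain ⟨⟨hp1, hp2⟩, hp3⟩ := hpN
            have hpIoo : p.1 ∈ Ioo a b := by
              constructor
              · exact lt_trans (by linarith) hp1
              · refine lt_of_lt_of_le hp2 ?_
                rw [hu2def, hldef]
                linarith
            have hpW : p.1 ∈ W := Ioo_aW_bW_sub hx₀ hpIoo
            obtain ⟨hae, hbe⟩ := loc_const hW hWs hx₀ hpIoo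
            rw [G2_of_mem hpW]
            dsimp only
            rw [hae, ← hadef, hbe, ← hbdef, ← hldef]
            have hys := snd_mem_of_HS hpHS
            have h5 : 1 - p.2 < eps := by simp only [mem_Ioi] at hp3; linarith
            have hk1 : l * (1 - p.2) ≤ u1 := by
              have h6 : eps ≤ u1/l := by rw [hepsdef]; exact min_le_left _ _
              have h7 := mul_le_mul_of_nonneg_left (le_of_lt (lt_of_lt_of_le h5 h6)) hl.le
              calc l * (1 - p.2) ≤ l * (u1/l) := h7
                _ = u1 := by field_simp
            have hk2 : l * (1 - p.2) ≤ l - u2 := by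
              have h6 : eps ≤ (l - u2)/l := by rw [hepsdef]; exact min_le_right _ _
              have h7 := mul_le_mul_of_nonneg_left (le_of_lt (lt_of_lt_of_le h5 h6)) hl.le
              calc l * (1 - p.2) ≤ l * ((l - u2)/l) := h7
                _ = l - u2 := by field_simp
            rw [phiC_eq_B (u1 := u1) (u2 := u2) hl hu1pos (by linarith [hp1]) (by linarith [hp2])
              hu2l hys.1 hys.2 hk1 hk2]
          have hEv : (fun p => (G2 W p).1) =ᶠ[nhdsWithin p₀ (HS W)] FB := by
            apply Filter.eventuallyEq_of_mem (s := N ∩ HS W) ?_ hEq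
            exact Filter.inter_mem (mem_nhdsWithin_of_mem_nhds (hNopen.mem_nhds hp₀N))
              self_mem_nhdsWithin
          exact (hFBc.continuousAt.continuousWithinAt).congr_of_eventuallyEq hEv
            (hEq p₀ ⟨hp₀N, hp₀⟩)
        · -- y₀ < 1 : usual continuity
          set l := b - a with hldef
          set F := fun p : ℝ × ℝ => a + max (min ((p.1 - a)/(1 - p.2))
            ((p.1 - a) * (1 - p.2/2) + p.2 * l/4)) (l + ((p.1 - a) - l)/(1 - p.2)) with hFdef
          have hden : (1 : ℝ) - p₀.2 ≠ 0 := by linarith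
          have hFc : ContinuousAt F p₀ := by
            rw [hFdef]
            have c1 : ContinuousAt (fun p : ℝ × ℝ => (p.1 - a)/(1 - p.2)) p₀ :=
              ContinuousAt.div ((continuous_fst.sub continuous_const).continuousAt)
                ((continuous_const.sub continuous_snd).continuousAt) hden
            have c2 : ContinuousAt (fun p : ℝ × ℝ => (p.1 - a) * (1 - p.2/2) + p.2 * l/4) p₀ :=
              (((continuous_fst.sub continuous_const).mul
                (continuous_const.sub (continuous_snd.div_const 2))).add
                ((continuous_snd.mul continuous_const).div_const 4)).continuousAt
            have c3 : ContinuousAt (fun p : ℝ × ℝ => l + ((p.1 - a) - l)/(1 - p.2)) p₀ :=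
              ContinuousAt.add continuousAt_const
                (ContinuousAt.div (((continuous_fst.sub continuous_const).sub
                  continuous_const).continuousAt)
                  ((continuous_const.sub continuous_snd).continuousAt) hden)
            exact ContinuousAt.add continuousAt_const ((c1.min c2).max c3)
          set N := Ioo a b ×ˢ Iio (1:ℝ) with hNdef
          have hNopen : IsOpen N := isOpen_Ioo.prod isOpen_Iio
          have hp₀N : p₀ ∈ N := ⟨⟨ha, hb⟩, h1⟩
          have hEq : ∀ p ∈ N, (G2 W p).1 = F p := by
            rintro p ⟨hpIoo, hp2⟩
            simp only [mem_Iio] at hp2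
            have hpW : p.1 ∈ W := Ioo_aW_bW_sub hx₀ hpIoo
            obtain ⟨hae, hbe⟩ := loc_const hW hWs hx₀ hpIoo
            rw [G2_of_mem hpW]
            dsimp only
            rw [hae, ← hadef, hbe, ← hbdef, ← hldef, phiC, if_neg (ne_of_lt hp2), hFdef]
          have hEv : (fun p => (G2 W p).1) =ᶠ[nhds p₀] F :=
            Filter.eventuallyEq_of_mem (hNopen.mem_nhds hp₀N) hEq
          exact ((continuousAt_congr hEv).2 hFc).continuousWithinAt
      · -- p₀.1 ∉ W
        have h1 : p₀.2 < 1 := by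
          rcases mem_HS.1 hp₀ with h | h
          · exact h.2
          · exact absurd h.1 hx₀
        set sstar := 2/(1 - p₀.2) with hsdef
        have hs1 : 1 ≤ sstar := by
          rw [hsdef, le_div_iff₀ (by linarith)]
          linarith [hy₀.1]
        rw [Metric.continuousWithinAt_iff]
        intro ε hε
        refine ⟨min ((1 - p₀.2)/2) (ε/(2*(1 + sstar))),
          lt_min (by linarith) (div_pos hε (by linarith)), ?_⟩
        intro q hq hdist
        have hdq1 : dist q.1 p₀.1 ≤ dist q p₀ := by rw [Prod.dist_eq]; exact le_max_left _ _
        have hdq2 : dist q.2 p₀.2 ≤ dist q p₀ := by rw [Prod.dist_eq]; exact le_max_right _ _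
        have hq2lt : q.2 ≤ (1 + p₀.2)/2 := by
          have h5 : dist q.2 p₀.2 < (1 - p₀.2)/2 :=
            lt_of_le_of_lt hdq2 (lt_of_lt_of_le hdist (min_le_left _ _))
          rw [Real.dist_eq, abs_sub_lt_iff] at h5
          linarith [h5.1]
        have hqy := snd_mem_of_HS hq
        have hq2l1 : q.2 < 1 := by linarith
        have hinv : (1 - q.2) * sstar ≥ 1 := by
          rw [hsdef]
          rw [ge_iff_le, ← sub_nonneg]
          have h7 : (1:ℝ) - p₀.2 > 0 := by linarith
          have : (1 - q.2) * (2/(1 - p₀.2)) - 1 = ((1 - p₀.2) - 2*(q.2 - p₀.2) ) / (1 - p₀.2) := by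
            field_simp
            ring
          rw [this]
          apply div_nonneg _ h7.le
          have h8 : q.2 - p₀.2 ≤ (1 - p₀.2)/2 := by linarith
          linarith
        -- the key pointwise bound
        have hbound : |(G2 W q).1 - q.1| ≤ sstar * |q.1 - p₀.1| := by
          by_cases hqW : q.1 ∈ W
          · set aa := aW W q.1 with haadef
            set bb := bW W q.1 with hbbdef
            have haq : aa < q.1 := aW_lt hW hWs hqW
            have hbq : q.1 < bb := bW_gt hW hWs hqW
            set u := q.1 - aa with hudef
            set l := bb - aa with hldef
            have hu : 0 < u := by rw [hudef]; linarith
            have hul : u < l := by rw [hudef, hldef]; linarith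
            have hl : 0 < l := by rw [hldef]; linarith
            have h1q2 : 0 < 1 - q.2 := by linarith
            have B1 : phiC l u q.2 ≤ u / (1 - q.2) := phiC_le_A hl hu hul.le hqy.1 hq2l1
            have B2 : phiC l u q.2 < l := phiC_lt hl hu hul hqy.1 hqy.2
            have B3 : u * (1 - q.2/2) ≤ phiC l u q.2 := phiC_ge_half hl hu hqy.1 hqy.2
            have B4 : l + (u - l)/(1 - q.2) ≤ phiC l u q.2 := phiC_ge_C hq2l1
            have hdiv1 : u / (1 - q.2) ≤ u * sstar := by
              rw [div_le_iff₀ h1q2]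
              nlinarith [hu.le]
            have hdiv2 : (l - u) / (1 - q.2) ≤ (l - u) * sstar := by
              rw [div_le_iff₀ h1q2]
              nlinarith
            have hGval : (G2 W q).1 = aa + phiC l u q.2 := by
              rw [G2_of_mem hqW]
            have habs : |(G2 W q).1 - q.1| = |phiC l u q.2 - u| := by
              rw [hGval]
              congr 1
              rw [hudef]
              ring
            have hminle : min u (l - u) ≤ |q.1 - p₀.1| := by
              rcases le_total p₀.1 q.1 with hc | hc
              · have h6 : p₀.1 ≤ aa := notW_le_aW hqW hx₀ hc
                have : u ≤ q.1 - p₀.1 := by rw [hudef]; linarith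
                calc min u (l - u) ≤ u := min_le_left _ _
                  _ ≤ q.1 - p₀.1 := this
                  _ ≤ |q.1 - p₀.1| := le_abs_self _
              · have h6 : bb ≤ p₀.1 := bW_le_notW hqW hx₀ hc
                have : l - u ≤ p₀.1 - q.1 := by rw [hudef, hldef]; linarith
                calc min u (l - u) ≤ l - u := min_le_right _ _
                  _ ≤ p₀.1 - q.1 := this
                  _ ≤ |q.1 - p₀.1| := by rw [abs_sub_comm]; exact le_abs_self _
            have hphib : |phiC l u q.2 - u| ≤ sstar * min u (l - u) := by
              rw [abs_sub_le_iff]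
              constructor
              · -- phi - u ≤ sstar * min
                rcases le_total u (l - u) with hc | hc
                · rw [min_eq_left hc]
                  have : phiC l u q.2 - u ≤ u / (1 - q.2) - u := by linarith
                  nlinarith [hu.le]
                · rw [min_eq_right hc]
                  have : phiC l u q.2 - u ≤ l - u := by linarith
                  nlinarith
              · rcases le_total u (l - u) with hc | hc
                · rw [min_eq_left hc]
                  have : u - phiC l u q.2 ≤ u * (q.2/2) := by nlinarith
                  nlinarith [hu.le, hqy.1, hqy.2]
                · rw [min_eq_right hc]
                  have h7 : u - phiC l u q.2 ≤ (l - u)/(1 - q.2) - (l - u) := by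
                    have : u - (l + (u - l)/(1 - q.2)) = (l - u)/(1-q.2) - (l - u) := by
                      field_simp
                      ring
                    linarith [B4, this]
                  nlinarith
            rw [habs]
            calc |phiC l u q.2 - u| ≤ sstar * min u (l - u) := hphib
              _ ≤ sstar * |q.1 - p₀.1| :=
                mul_le_mul_of_nonneg_left hminle (by linarith)
          · rw [G2_of_not hqW]
            simp only [sub_self, abs_zero]
            positivity
        -- assemble
        have hGp₀ : (G2 W p₀).1 = p₀.1 := by rw [G2_of_not hx₀]
        show dist (G2 W q).1 (G2 W p₀).1 < ε
        rw [hGp₀, Real.dist_eq]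
        have htri : |(G2 W q).1 - p₀.1| ≤ |(G2 W q).1 - q.1| + |q.1 - p₀.1| := abs_sub_le _ _ _
        have h8 : |q.1 - p₀.1| ≤ dist q p₀ := by rw [← Real.dist_eq]; exact hdq1
        have h9 : dist q p₀ < ε/(2*(1 + sstar)) := lt_of_lt_of_le hdist (min_le_right _ _)
        have h10 : |(G2 W q).1 - p₀.1| ≤ (1 + sstar) * dist q p₀ := by
          calc |(G2 W q).1 - p₀.1| ≤ |(G2 W q).1 - q.1| + |q.1 - p₀.1| := htri
            _ ≤ sstar * |q.1 - p₀.1| + |q.1 - p₀.1| := by linarith [hbound]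
            _ = (1 + sstar) * |q.1 - p₀.1| := by ring
            _ ≤ (1 + sstar) * dist q p₀ := mul_le_mul_of_nonneg_left h8 (by linarith)
        have h11 : (1 + sstar) * dist q p₀ < (1 + sstar) * (ε/(2*(1 + sstar))) :=
          mul_lt_mul_of_pos_left h9 (by linarith)
        have h12 : (1 + sstar) * (ε/(2*(1 + sstar))) = ε/2 := by
          field_simp
        calc |(G2 W q).1 - p₀.1| ≤ (1 + sstar) * dist q p₀ := h10
          _ < (1 + sstar) * (ε/(2*(1 + sstar))) := h11
          _ = ε/2 := h12
          _ < ε := by linarith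
    exact (hfst.prodMk continuous_snd.continuousOn).congr
      (fun p _ => Prod.ext rfl (G2_snd W p))

end comps

lemma upBd_HS (V : Set ℝ) : upBd (HS V) = V ×ˢ ({1} : Set ℝ) := by
  ext p
  rw [upBd, mem_inter_iff, mem_HS, mem_prod, mem_singleton_iff, mem_setOf_eq]
  constructor
  · rintro ⟨⟨h0, h1⟩ | ⟨hv, h1⟩, h2⟩
    · exact absurd h2 (ne_of_lt h1)
    · exact ⟨hv, h1⟩
  · rintro ⟨hv, h1⟩
    exact ⟨Or.inr ⟨hv, h1⟩, h1⟩

/-- Structure of the connected components of a union of "separated" intervals, crossed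
with `{1}`. -/
lemma comp_structure {m M : ℝ → ℝ} {I : Set ℝ} {V : Set ℝ}
    (hV : V = ⋃ i ∈ I, Ioo (m i) (M i))
    (hlt : ∀ i ∈ I, m i < M i)
    (hsep : ∀ i ∈ I, ∀ j ∈ I, (Icc (m i) (M i) ∩ Icc (m j) (M j)).Nonempty →
      m i = m j ∧ M i = M j) :
    (∀ p ∈ V ×ˢ ({1} : Set ℝ), Bornology.IsBounded (connectedComponentIn (V ×ˢ ({1} : Set ℝ)) p))
    ∧ (∀ p ∈ V ×ˢ ({1} : Set ℝ), ∀ q ∈ V ×ˢ ({1} : Set ℝ),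
        connectedComponentIn (V ×ˢ ({1} : Set ℝ)) p ≠ connectedComponentIn (V ×ˢ ({1} : Set ℝ)) q →
        closure (connectedComponentIn (V ×ˢ ({1} : Set ℝ)) p) ∩
          closure (connectedComponentIn (V ×ˢ ({1} : Set ℝ)) q) = ∅) := by
  set T := V ×ˢ ({1} : Set ℝ) with hTdef
  -- endpoints are not in V
  have hnotin : ∀ i ∈ I, m i ∉ V ∧ M i ∉ V := by
    intro i hi
    constructor
    · intro hmem
      rw [hV, mem_iUnion₂] at hmem
      obtain ⟨j, hj, hmj⟩ := hmem
      have h := hsep i hi j hj ⟨m i, ⟨le_refl _, (hlt i hi).le⟩, ⟨hmj.1.le, hmj.2.le⟩⟩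
      rw [h.1] at hmj
      exact absurd hmj.1 (lt_irrefl _)
    · intro hmem
      rw [hV, mem_iUnion₂] at hmem
      obtain ⟨j, hj, hmj⟩ := hmem
      have h := hsep i hi j hj ⟨M i, ⟨(hlt i hi).le, le_refl _⟩, ⟨hmj.1.le, hmj.2.le⟩⟩
      rw [h.2] at hmj
      exact absurd hmj.2 (lt_irrefl _)
  -- identification of components
  have key : ∀ p ∈ T, ∃ i ∈ I, p.1 ∈ Ioo (m i) (M i) ∧
      connectedComponentIn T p = Ioo (m i) (M i) ×ˢ ({1} : Set ℝ) := by
    intro p hp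
    obtain ⟨hpV, hp1⟩ := hp
    rw [hV, mem_iUnion₂] at hpV
    obtain ⟨i, hi, hpi⟩ := hpV
    refine ⟨i, hi, hpi, ?_⟩
    have hpe : p = (p.1, (1:ℝ)) := by rw [← hp1]
    apply Subset.antisymm
    · -- component ⊆ interval × {1}
      have hC : IsPreconnected (connectedComponentIn T p) := isPreconnected_connectedComponentIn
      have hCT : connectedComponentIn T p ⊆ T := connectedComponentIn_subset T p
      have hK : IsPreconnected (Prod.fst '' connectedComponentIn T p) :=
        hC.image _ continuous_fst.continuousOn
      have hKV : Prod.fst '' connectedComponentIn T p ⊆ V := by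
        rintro t ⟨c, hc, rfl⟩
        exact (hCT hc).1
      have hKord : OrdConnected (Prod.fst '' connectedComponentIn T p) := hK.ordConnected
      have hzK : p.1 ∈ Prod.fst '' connectedComponentIn T p :=
        ⟨p, mem_connectedComponentIn (by rw [hTdef]; exact ⟨by rw [hV, mem_iUnion₂]; exact ⟨i, hi, hpi⟩, hp1⟩), rfl⟩
      have hKsub : Prod.fst '' connectedComponentIn T p ⊆ Ioo (m i) (M i) := by
        intro t ht
        by_contra htn
        rw [mem_Ioo] at htn
        push_neg at htn
        rcases le_or_gt t (m i) with hc | hc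
        · have : m i ∈ Prod.fst '' connectedComponentIn T p :=
            hKord.out ht hzK ⟨hc, hpi.1.le⟩
          exact (hnotin i hi).1 (hKV this)
        · have hMt : M i ≤ t := htn hc
          have : M i ∈ Prod.fst '' connectedComponentIn T p :=
            hKord.out hzK ht ⟨hpi.2.le, hMt⟩
          exact (hnotin i hi).2 (hKV this)
      intro c hc
      exact ⟨hKsub ⟨c, hc, rfl⟩, (hCT hc).2⟩
    · -- interval × {1} ⊆ component
      apply IsPreconnected.subset_connectedComponentIn
      · exact ((convex_Ioo (m i) (M i)).prod (convex_singleton 1)).isPreconnected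
      · rw [hpe]; exact ⟨hpi, rfl⟩
      · rintro c ⟨hc1, hc2⟩
        refine ⟨?_, hc2⟩
        rw [hV, mem_iUnion₂]
        exact ⟨i, hi, hc1⟩
  constructor
  · intro p hp
    obtain ⟨i, hi, hpi, hident⟩ := key p hp
    rw [hident]
    exact (Metric.isBounded_Ioo _ _).prod (Bornology.isBounded_singleton)
  · intro p hp q hq hne
    obtain ⟨i, hi, hpi, hidp⟩ := key p hp
    obtain ⟨j, hj, hqj, hidq⟩ := key q hq
    rw [hidp, hidq] at hne ⊢
    have hIcc : Icc (m i) (M i) ∩ Icc (m j) (M j) = ∅ := by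
      by_contra hne2
      rcases nonempty_iff_ne_empty.2 hne2 with ⟨w, hw⟩
      obtain ⟨h1, h2⟩ := hsep i hi j hj ⟨w, hw⟩
      rw [h1, h2] at hne
      exact hne rfl
    rw [closure_prod_eq, closure_prod_eq, closure_Ioo (ne_of_lt (hlt i hi)),
      closure_Ioo (ne_of_lt (hlt j hj)), closure_singleton]
    ext c
    simp only [mem_inter_iff, mem_prod, mem_singleton_iff, mem_empty_iff_false, iff_false]
    rintro ⟨⟨hc1, hc2⟩, hc3, hc4⟩
    have : c.1 ∈ Icc (m i) (M i) ∩ Icc (m j) (M j) := ⟨hc1, hc3⟩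
    rw [hIcc] at this
    exact this

theorem stmt_6 (S : Set (ℝ × ℝ)) (hS : IsHalfStrip S) :
    ∃ (S' : Set (ℝ × ℝ)) (h : ℝ × ℝ → ℝ × ℝ),
      IsHalfStrip S' ∧ (univ ×ˢ Ico (0:ℝ) 1) ⊆ S' ∧ S' ⊆ S ∧
      (∀ p ∈ upBd S', Bornology.IsBounded (connectedComponentIn (upBd S') p)) ∧
      (∀ p ∈ upBd S', ∀ q ∈ upBd S',
        connectedComponentIn (upBd S') p ≠ connectedComponentIn (upBd S') q →
        closure (connectedComponentIn (upBd S') p) ∩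
          closure (connectedComponentIn (upBd S') q) = ∅) ∧
      BijOn h S S' ∧ ContinuousOn h S ∧
      (∃ g : ℝ × ℝ → ℝ × ℝ, InvOn g h S S' ∧ ContinuousOn g S') ∧
      (∀ x : ℝ, h (x, 0) = (x, 0)) ∧
      (∀ p ∈ S, (h p).2 = p.2) := by
  obtain ⟨U, hU, hSeq⟩ := halfStrip_eq_HS hS
  subst hSeq
  set W := tauR '' U with hWdef
  have hWopen : IsOpen W := isOpen_tauR_image hU
  have hWs : W ⊆ Ioo (-1 : ℝ) 1 := tauR_image_Ioo_subset
  have N1 : Nice U W T1 := nice_T1 hU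
  have N2 : Nice W (VW W) (G2 W) := nice_G2 hWopen hWs
  obtain ⟨Ninv, hContInv⟩ := N1.inv hU
  set g1 := Function.invFunOn T1 (HS U) with hg1def
  set V3 := ⋃ x ∈ W, Ioo (sigR (mI W x)) (sigR (MI W x)) with hV3def
  -- endpoint facts
  have hmem1 : ∀ x ∈ W, mI W x ∈ Ioo (-1 : ℝ) 1 ∧ MI W x ∈ Ioo (-1 : ℝ) 1 := by
    intro x hx
    obtain ⟨h1, h2, h3⟩ := mI_MI_aux hWopen hWs hx
    have h4 := aW_ge hWs hx
    have h5 := bW_le hWs hx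
    exact ⟨⟨by linarith, by linarith⟩, ⟨by linarith, by linarith⟩⟩
  have hmMlt : ∀ x ∈ W, sigR (mI W x) < sigR (MI W x) := by
    intro x hx
    exact sigR_strictMonoOn (hmem1 x hx).1 (hmem1 x hx).2 (mI_MI_aux hWopen hWs hx).2.1
  have hIccIoo : ∀ x ∈ W, Icc (mI W x) (MI W x) ⊆ Ioo (aW W x) (bW W x) := by
    intro x hx t ht
    obtain ⟨h1, h2, h3⟩ := mI_MI_aux hWopen hWs hx
    exact ⟨lt_of_lt_of_le h1 ht.1, lt_of_le_of_lt ht.2 h3⟩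
  have hIccm1 : ∀ x ∈ W, Icc (mI W x) (MI W x) ⊆ Ioo (-1 : ℝ) 1 := by
    intro x hx t ht
    exact ⟨lt_of_lt_of_le (hmem1 x hx).1.1 ht.1, lt_of_le_of_lt ht.2 (hmem1 x hx).2.2⟩
  -- g1 values
  have hg1T1 : ∀ p ∈ HS U, g1 (T1 p) = p := fun p hp => N1.1.injOn.leftInvOn_invFunOn hp
  have hsigU : ∀ z ∈ W, sigR z ∈ U := by
    rintro z ⟨xu, hxu, rfl⟩
    rw [sigR_tauR]
    exact hxu
  have hg1one : ∀ z ∈ W, g1 (z, 1) = (sigR z, 1) := by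
    intro z hz
    have hz1 : |z| < 1 := by
      have := hWs hz
      rw [abs_lt]
      exact ⟨this.1, this.2⟩
    have hT : T1 (sigR z, 1) = (z, 1) := by rw [T1_at_one, tauR_sigR hz1]
    rw [← hT]
    exact hg1T1 _ (mem_HS_one (hsigU z hz))
  have hV3subU : V3 ⊆ U := by
    intro v hv
    rw [hV3def, mem_iUnion₂] at hv
    obtain ⟨x, hx, hvx⟩ := hv
    have htv : tauR v ∈ Ioo (mI W x) (MI W x) := by
      have e1 : tauR (sigR (mI W x)) = mI W x :=
        tauR_sigR (abs_lt.2 ⟨(hmem1 x hx).1.1, (hmem1 x hx).1.2⟩)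
      have e2 : tauR (sigR (MI W x)) = MI W x :=
        tauR_sigR (abs_lt.2 ⟨(hmem1 x hx).2.1, (hmem1 x hx).2.2⟩)
      exact ⟨e1 ▸ tauR_strictMono hvx.1, e2 ▸ tauR_strictMono hvx.2⟩
    have htvW : tauR v ∈ W :=
      Ioo_aW_bW_sub hx (hIccIoo x hx ⟨htv.1.le, htv.2.le⟩)
    obtain ⟨xu, hxu, he⟩ := htvW
    rwa [← tauR_strictMono.injective he]
  -- the image identity for stage 3
  have him : g1 '' (HS (VW W)) = HS V3 := by
    apply Subset.antisymm
    · rintro q ⟨p, hp, rfl⟩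
      have hpW : p ∈ HS W := HS_mono (VW_sub hWopen hWs) hp
      rcases mem_HS.1 hp with ⟨h0, h1⟩ | ⟨hv, h1⟩
      · have hsnd : (g1 p).2 = p.2 := Ninv.2.2.1 p hpW
        exact mem_HS_of_lt (by rw [hsnd]; exact h0) (by rw [hsnd]; exact h1)
      · have hpe : p = (p.1, (1:ℝ)) := by rw [← h1]
        rw [hpe, hg1one p.1 (VW_sub hWopen hWs hv)]
        apply mem_HS_one
        rw [VW, mem_iUnion₂] at hv
        obtain ⟨x, hx, hvx⟩ := hv
        rw [hV3def, mem_iUnion₂]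
        refine ⟨x, hx, ?_, ?_⟩
        · exact sigR_strictMonoOn (hmem1 x hx).1
            (hIccm1 x hx ⟨hvx.1.le, hvx.2.le⟩) hvx.1
        · exact sigR_strictMonoOn (hIccm1 x hx ⟨hvx.1.le, hvx.2.le⟩)
            (hmem1 x hx).2 hvx.2
    · intro q hq
      rcases mem_HS.1 hq with ⟨h0, h1⟩ | ⟨hv, h1⟩
      · refine ⟨T1 q, mem_HS_of_lt (p := T1 q) h0 h1, hg1T1 q (mem_HS_of_lt h0 h1)⟩
      · rw [hV3def, mem_iUnion₂] at hv
        obtain ⟨x, hx, hvx⟩ := hv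
        have htv : tauR q.1 ∈ Ioo (mI W x) (MI W x) := by
          have e1 : tauR (sigR (mI W x)) = mI W x :=
            tauR_sigR (abs_lt.2 ⟨(hmem1 x hx).1.1, (hmem1 x hx).1.2⟩)
          have e2 : tauR (sigR (MI W x)) = MI W x :=
            tauR_sigR (abs_lt.2 ⟨(hmem1 x hx).2.1, (hmem1 x hx).2.2⟩)
          exact ⟨e1 ▸ tauR_strictMono hvx.1, e2 ▸ tauR_strictMono hvx.2⟩
        have hzVW : tauR q.1 ∈ VW W := by
          rw [VW, mem_iUnion₂]
          exact ⟨x, hx, htv⟩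
        refine ⟨(tauR q.1, 1), mem_HS_one hzVW, ?_⟩
        rw [hg1one _ (VW_sub hWopen hWs hzVW), sigR_tauR]
        exact Prod.ext rfl h1.symm
  have N3 : Nice (VW W) V3 g1 := Ninv.restrict (VW_sub hWopen hWs) hV3subU him
  have N123 : Nice U V3 (g1 ∘ (G2 W ∘ T1)) := (N1.comp N2).comp N3
  obtain ⟨NfinalInv, hgcont⟩ := N123.inv hU
  set hmap := g1 ∘ (G2 W ∘ T1) with hhdef
  have hV3open : IsOpen V3 := isOpen_biUnion fun _ _ => isOpen_Ioo
  -- component structure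
  have hsep : ∀ i ∈ W, ∀ j ∈ W,
      (Icc (sigR (mI W i)) (sigR (MI W i)) ∩ Icc (sigR (mI W j)) (sigR (MI W j))).Nonempty →
      sigR (mI W i) = sigR (mI W j) ∧ sigR (MI W i) = sigR (MI W j) := by
    intro i hi j hj ⟨w, hwi, hwj⟩
    have hle_i : mI W i ≤ MI W i := (mI_MI_aux hWopen hWs hi).2.1.le
    have hle_j : mI W j ≤ MI W j := (mI_MI_aux hWopen hWs hj).2.1.le
    have hconti : ContinuousOn sigR (Icc (mI W i) (MI W i)) :=
      sigR_continuousOn.mono (fun t ht => hIccm1 i hi ht)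
    have hcontj : ContinuousOn sigR (Icc (mI W j) (MI W j)) :=
      sigR_continuousOn.mono (fun t ht => hIccm1 j hj ht)
    obtain ⟨ti, hti, htiw⟩ := intermediate_value_Icc hle_i hconti hwi
    obtain ⟨tj, htj, htjw⟩ := intermediate_value_Icc hle_j hcontj hwj
    have htij : ti = tj :=
      sigR_strictMonoOn.injOn (hIccm1 i hi hti) (hIccm1 j hj htj) (htiw.trans htjw.symm)
    have htiIoo : ti ∈ Ioo (aW W i) (bW W i) := hIccIoo i hi hti
    have htjIoo : ti ∈ Ioo (aW W j) (bW W j) := htij ▸ hIccIoo j hj htj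
    obtain ⟨hai, hbi⟩ := loc_const hWopen hWs hi htiIoo
    obtain ⟨haj, hbj⟩ := loc_const hWopen hWs hj htjIoo
    have haij : aW W i = aW W j := by rw [← hai, haj]
    have hbij : bW W i = bW W j := by rw [← hbi, hbj]
    constructor
    · unfold mI; rw [haij, hbij]
    · unfold MI; rw [haij, hbij]
  obtain ⟨hbdd, hdisj⟩ := comp_structure (m := fun x => sigR (mI W x)) (M := fun x => sigR (MI W x))
    (I := W) (V := V3) hV3def hmMlt hsep
  have hupBd : upBd (HS V3) = V3 ×ˢ ({1} : Set ℝ) := upBd_HS V3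
  -- h fixes the bottom line
  have hbottom : ∀ x : ℝ, hmap (x, 0) = (x, 0) := by
    intro x
    have hT0 : T1 (x, 0) = (x, 0) := by
      rw [T1]
      norm_num
    have hG0 : G2 W (x, 0) = (x, 0) := by
      by_cases hxW : x ∈ W
      · rw [G2_of_mem (p := ((x : ℝ), (0 : ℝ))) hxW]
        dsimp only
        rw [phiC_zero]
        norm_num
      · exact G2_of_not (p := ((x : ℝ), (0 : ℝ))) hxW
    have hmem0 : ((x : ℝ), (0 : ℝ)) ∈ HS U := mem_HS_of_lt (by norm_num) (by norm_num)
    calc hmap (x, 0) = g1 (G2 W (T1 (x, 0))) := rfl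
      _ = g1 (x, 0) := by rw [hT0, hG0]
      _ = g1 (T1 (x, 0)) := by rw [hT0]
      _ = (x, 0) := hg1T1 _ hmem0
  refine ⟨HS V3, hmap, isHalfStrip_HS hV3open, fun p hp => Or.inl hp, HS_mono hV3subU,
    ?_, ?_, N123.1, N123.2.1, ⟨Function.invFunOn hmap (HS U), N123.1.invOn_invFunOn, hgcont⟩,
    hbottom, N123.2.2.1⟩
  · rw [hupBd]; exact hbdd
  · rw [hupBd]; exact hdisj

end StmtSixProof
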